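/- (Lemma A.4 of the paper, inductive step.) Let W ⊆ V with |W| ≥ 3, and suppose there exist X ⊆ V with W ⊆ X and i ∈ W such that D[X] is a directed sub-block, i is reachable in D[W] from every other vertex of W, and i is reachable in D[X] from every other vertex of X. Suppose W′ = W ∪ {k} (with k ∈ V ∖ W) is obtained from W by one exact generation step. Then there exists Y ⊆ V with W′ ⊆ Y such that D[Y] is a directed sub-block, i is reachable in D[W′] from every other vertex of W′, and i is reachable in D[Y] from every other vertex of Y. -/

import Mathlib

open Set

variable {V : Type*}

/-- One arc step within the induced subgraph on the vertex set `S`. -/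
def StepIn (A : V → V → Prop) (S : Set V) (u v : V) : Prop :=
  u ∈ S ∧ v ∈ S ∧ A u v

/-- `v` is reachable from `u` by a directed path in the induced subgraph on `S`
(every vertex is reachable from itself, provided it lies in `S`). -/
def ReachIn (A : V → V → Prop) (S : Set V) (u v : V) : Prop :=
  u ∈ S ∧ Relation.ReflTransGen (StepIn A S) u v

/-- `IN(X)`: the set of vertices from which some member of `X` is reachable,
computed in the induced subgraph on `S`. -/
def InSet (A : V → V → Prop) (S : Set V) (X : Set V) : Set V :=
  {u | ∃ x ∈ X, ReachIn A S u x}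

/-- `Z` is dynamically partitioning with respect to `X` and `Y`:
`IN(X) ∩ IN(Y) = ∅` computed in the induced subgraph `D − Z`. -/
def DynPart (A : V → V → Prop) (X Y Z : Set V) : Prop :=
  InSet A Zᶜ X ∩ InSet A Zᶜ Y = ∅

/-- `StepsLe r n u v`: `v` can be reached from `u` in at most `n` `r`-steps. -/
def StepsLe (r : V → V → Prop) : ℕ → V → V → Prop
  | 0, u, v => u = v
  | n + 1, u, v => u = v ∨ ∃ w, r u w ∧ StepsLe r n w v

/-- `v` is reachable from `u` by a directed path using at most `n` arcs
in the induced subgraph on `S`. -/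
def ReachInLe (A : V → V → Prop) (S : Set V) (n : ℕ) (u v : V) : Prop :=
  u ∈ S ∧ StepsLe (StepIn A S) n u v

/-- `IN_a(X)` computed in the induced subgraph on `S`. -/
def InSetLe (A : V → V → Prop) (S : Set V) (a : ℕ) (X : Set V) : Set V :=
  {u | ∃ x ∈ X, ReachInLe A S a u x}

/-- The vertex `i` is cycle-partitioning at order `x` with respect to `X` and `Y`:
`IN_a(X) ∩ IN_b(Y) = ∅` in `D − {i}` for all `a + b = x`. -/
def CyclePart (A : V → V → Prop) (X Y : Set V) (i : V) (x : ℕ) : Prop :=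
  ∀ a b : ℕ, a + b = x → InSetLe A {i}ᶜ a X ∩ InSetLe A {i}ᶜ b Y = ∅

/-- One adjacency step of the underlying (simple) graph of `D[W]`. -/
def UStep (A : V → V → Prop) (W : Set V) (u v : V) : Prop :=
  u ∈ W ∧ v ∈ W ∧ u ≠ v ∧ (A u v ∨ A v u)

/-- The underlying graph of `D[W]` is connected. -/
def UConnected (A : V → V → Prop) (W : Set V) : Prop :=
  W.Nonempty ∧ ∀ u ∈ W, ∀ v ∈ W, Relation.ReflTransGen (UStep A W) u v

/-- The underlying graph of `D[W]` is biconnected: at least 3 vertices, connected,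
and deleting any single vertex leaves a connected graph. -/
def Biconnected (A : V → V → Prop) (W : Set V) : Prop :=
  3 ≤ W.ncard ∧ UConnected A W ∧ ∀ v ∈ W, UConnected A (W \ {v})

/-- `D[W]` is a directed sub-block: some vertex of `W` is reachable in `D[W]` from
every other vertex of `W`, and the underlying graph of `D[W]` is biconnected. -/
def DirectedSubBlock (A : V → V → Prop) (W : Set V) : Prop :=
  (∃ i ∈ W, ∀ j ∈ W, ReachIn A W j i) ∧ Biconnected A W

/-- A directed sub-block is a transmission block iff it is maximal. -/
def TransmissionBlock (A : V → V → Prop) (W : Set V) : Prop :=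
  DirectedSubBlock A W ∧ ∀ U : Set V, W ⊂ U → ¬ DirectedSubBlock A U

/-- A connected pair: a two-element set `{i, j}` with an arc between `i` and `j`. -/
def ConnectedPair (A : V → V → Prop) (W : Set V) : Prop :=
  ∃ i j : V, i ≠ j ∧ W = {i, j} ∧ (A i j ∨ A j i)

/-- `W'` is obtained from `W` by one exact generation step. -/
def ExactStep (A : V → V → Prop) (W W' : Set V) : Prop :=
  ∃ k, k ∉ W ∧ W' = W ∪ {k} ∧ ∃ j ∈ W, A k j ∧ ¬ DynPart A {k} (W \ {j}) {j}

/-- `W` is the last term of a finite chain of exact generation steps whose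
first term is a connected pair. -/
def GeneratedFromPair (A : V → V → Prop) (W : Set V) : Prop :=
  ∃ P : Set V, ConnectedPair A P ∧ Relation.ReflTransGen (ExactStep A) P W

/-- `W'` is obtained from `W` by one order-`x` cycle generation step. -/
def CycleStep (A : V → V → Prop) (x : ℕ) (W W' : Set V) : Prop :=
  ∃ k, k ∉ W ∧ W' = W ∪ {k} ∧ ∃ j ∈ W, A k j ∧ ¬ CyclePart A {k} (W \ {j}) j x

/-- `W` is the last term of a finite chain of order-`x` cycle generation steps
whose first term is a connected pair. -/
def XGenerable (A : V → V → Prop) (x : ℕ) (W : Set V) : Prop :=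
  ∃ P : Set V, ConnectedPair A P ∧ Relation.ReflTransGen (CycleStep A x) P W

section Helpers

variable {V : Type*}

private lemma reachIn_mono {A : V → V → Prop} {S T : Set V} (hST : S ⊆ T) {u v : V}
    (h : ReachIn A S u v) : ReachIn A T u v :=
  ⟨hST h.1, Relation.ReflTransGen.mono (fun a b hab => ⟨hST hab.1, hST hab.2.1, hab.2.2⟩) _ _ h.2⟩

private lemma rtg_toList {r : V → V → Prop} {u v : V} (h : Relation.ReflTransGen r u v) :
    ∃ l : List V, l.Chain' r ∧ l.head? = some u ∧ l.getLast? = some v := by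
  induction h with
  | refl => exact ⟨[u], List.isChain_singleton u, rfl, rfl⟩
  | @tail b c hab hbc ih =>
    obtain ⟨l, hch, hh, hl⟩ := ih
    refine ⟨l ++ [c], ?_, ?_, ?_⟩
    · refine hch.append (List.isChain_singleton c) ?_
      intro x hx y hy
      rw [hl, Option.mem_some_iff] at hx
      simp only [List.head?, Option.mem_some_iff] at hy
      subst hx; subst hy; exact hbc
    · rw [List.head?_append, hh]; rfl
    · rw [List.getLast?_append]; rfl

private lemma not_nodup_decomp :
    ∀ (l : List V), ¬ l.Nodup →
      ∃ (l₁ : List V) (a : V) (l₂ l₃ : List V), l = l₁ ++ a :: l₂ ++ a :: l₃ := by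
  intro l
  induction l with
  | nil => intro h; exact absurd List.nodup_nil h
  | cons x t ih =>
    intro h
    rw [List.nodup_cons] at h
    by_cases hx : x ∈ t
    · obtain ⟨s, t', rfl⟩ := List.append_of_mem hx
      exact ⟨[], x, s, t', rfl⟩
    · have ht : ¬ t.Nodup := fun hnd => h ⟨hx, hnd⟩
      obtain ⟨l₁, a, l₂, l₃, rfl⟩ := ih ht
      exact ⟨x :: l₁, a, l₂, l₃, rfl⟩

private lemma getLast?_append_cons (P : List V) (e : V) (M : List V) :
    (P ++ e :: M).getLast? = (e :: M).getLast? := by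
  rw [List.getLast?_append]
  have : (e :: M).getLast?.isSome := List.getLast?_isSome.mpr (by simp)
  obtain ⟨b, hb⟩ := Option.isSome_iff_exists.mp this
  rw [hb]; rfl

private lemma exists_nodup_chain {r : V → V → Prop} :
    ∀ (n : ℕ) (l : List V), l.length ≤ n → l.Chain' r →
      ∃ m : List V, m.Chain' r ∧ m.Nodup ∧ m.head? = l.head? ∧ m.getLast? = l.getLast? ∧
        ∀ x ∈ m, x ∈ l := by
  intro n
  induction n with
  | zero =>
    intro l hlen hch
    have : l = [] := List.length_eq_zero_iff.mp (Nat.le_zero.mp hlen)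
    subst this
    exact ⟨[], List.isChain_nil, List.nodup_nil, rfl, rfl, by simp⟩
  | succ n ih =>
    intro l hlen hch
    by_cases hnd : l.Nodup
    · exact ⟨l, hch, hnd, rfl, rfl, fun x hx => hx⟩
    · obtain ⟨l₁, a, l₂, l₃, rfl⟩ := not_nodup_decomp l hnd
      have hch' : ((l₁ ++ [a]) ++ l₃).Chain' r := by
        refine List.IsChain.append ?_ ?_ ?_
        · exact hch.prefix ⟨l₂ ++ a :: l₃, by simp⟩
        · exact hch.suffix ⟨l₁ ++ a :: l₂ ++ [a], by simp⟩
        · intro x hx y hy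
          have hgl : (l₁ ++ [a]).getLast? = some a := by
            rw [show l₁ ++ [a] = l₁ ++ a :: [] from rfl, getLast?_append_cons]; rfl
          rw [hgl] at hx
          obtain rfl : a = x := by simpa using hx
          have hsuf : (a :: l₃).Chain' r := hch.suffix ⟨l₁ ++ a :: l₂, by simp⟩
          exact (List.isChain_cons.mp hsuf).1 y hy
      have hlen' : ((l₁ ++ [a]) ++ l₃).length ≤ n := by
        have := hlen
        simp [List.length_append] at this ⊢
        omega
      obtain ⟨m, hm1, hm2, hm3, hm4, hm5⟩ := ih _ hlen' hch'
      refine ⟨m, hm1, hm2, ?_, ?_, ?_⟩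
      · rw [hm3]; cases l₁ <;> simp
      · rw [hm4, show l₁ ++ [a] ++ l₃ = l₁ ++ a :: l₃ by simp, getLast?_append_cons,
          show l₁ ++ a :: l₂ ++ a :: l₃ = (l₁ ++ a :: l₂) ++ a :: l₃ by simp,
          getLast?_append_cons]
      · intro x hx
        have := hm5 x hx
        simp only [List.mem_append, List.mem_cons] at this ⊢
        tauto

private lemma rtg_toNodupList {r : V → V → Prop} {u v : V} (h : Relation.ReflTransGen r u v) :
    ∃ l : List V, l.Chain' r ∧ l.Nodup ∧ l.head? = some u ∧ l.getLast? = some v := by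
  obtain ⟨l, hch, hh, hl⟩ := rtg_toList h
  obtain ⟨m, h1, h2, h3, h4, _⟩ := exists_nodup_chain l.length l le_rfl hch
  exact ⟨m, h1, h2, h3.trans hh, h4.trans hl⟩

private lemma chain'_rtg {r : V → V → Prop} :
    ∀ (l : List V), l.Chain' r → ∀ a, l.head? = some a → ∀ b, l.getLast? = some b →
      Relation.ReflTransGen (fun x y => x ∈ l ∧ y ∈ l ∧ r x y) a b := by
  intro l
  induction l with
  | nil => intro _ a ha; simp at ha
  | cons x t ih =>
    intro hch a ha b hb
    simp only [List.head?, Option.some_inj] at ha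
    subst ha
    cases t with
    | nil =>
      simp only [List.getLast?_singleton, Option.some_inj] at hb
      subst hb; exact Relation.ReflTransGen.refl
    | cons y t' =>
      rw [List.getLast?_cons_cons] at hb
      simp only [List.Chain', List.isChain_cons_cons] at hch
      have hrest := ih hch.2 y rfl b hb
      refine Relation.ReflTransGen.head ⟨by simp, by simp, hch.1⟩ ?_
      exact Relation.ReflTransGen.mono (fun p q hpq => ⟨List.mem_cons_of_mem _ hpq.1,
        List.mem_cons_of_mem _ hpq.2.1, hpq.2.2⟩) _ _ hrest

private lemma chain'_mem_S {A : V → V → Prop} {S : Set V} :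
    ∀ (l : List V), l.Chain' (StepIn A S) → ∀ a, l.head? = some a → a ∈ S →
      ∀ x ∈ l, x ∈ S := by
  intro l
  induction l with
  | nil => simp
  | cons x t ih =>
    intro hch a ha haS y hy
    simp only [List.head?, Option.some_inj] at ha
    subst ha
    cases t with
    | nil => simp at hy; subst hy; exact haS
    | cons z t' =>
      simp only [List.Chain', List.isChain_cons_cons] at hch
      rcases List.mem_cons.mp hy with rfl | hy'
      · exact haS
      · exact ih hch.2 z rfl hch.1.2.1 y hy'

private lemma split_first {p : V → Prop} :
    ∀ (l : List V), (∃ x ∈ l, p x) →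
      ∃ l₁ a l₂, l = l₁ ++ a :: l₂ ∧ p a ∧ ∀ y ∈ l₁, ¬ p y := by
  intro l
  induction l with
  | nil => simp
  | cons x t ih =>
    intro h
    by_cases hx : p x
    · exact ⟨[], x, t, rfl, hx, by simp⟩
    · have ht : ∃ y ∈ t, p y := by
        obtain ⟨y, hy, hpy⟩ := h
        rcases List.mem_cons.mp hy with rfl | hy'
        · exact absurd hpy hx
        · exact ⟨y, hy', hpy⟩
      obtain ⟨l₁, a, l₂, rfl, hpa, hl₁⟩ := ih ht
      refine ⟨x :: l₁, a, l₂, rfl, hpa, ?_⟩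
      intro y hy
      rcases List.mem_cons.mp hy with rfl | hy'
      · exact hx
      · exact hl₁ y hy'

private lemma split_last {p : V → Prop} (l : List V) (h : ∃ x ∈ l, p x) :
    ∃ l₁ a l₂, l = l₁ ++ a :: l₂ ∧ p a ∧ ∀ y ∈ l₂, ¬ p y := by
  obtain ⟨m₁, a, m₂, hrev, hpa, hm⟩ := split_first l.reverse (by
    obtain ⟨x, hx, hpx⟩ := h
    exact ⟨x, List.mem_reverse.mpr hx, hpx⟩)
  refine ⟨m₂.reverse, a, m₁.reverse, ?_, hpa, fun y hy => hm y (List.mem_reverse.mp hy)⟩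
  have := congrArg List.reverse hrev
  rw [List.reverse_reverse] at this
  rw [this]
  simp

private lemma rtg_ne_imp {r : V → V → Prop} {a b : V} (h : Relation.ReflTransGen r a b)
    (hne : a ≠ b) : ∃ c, r c b := by
  rcases h.cases_tail with rfl | ⟨c, _, hcb⟩
  · exact absurd rfl hne
  · exact ⟨c, hcb⟩

private lemma ustep_symm {A : V → V → Prop} {S : Set V} : Symmetric (UStep A S) :=
  fun _ _ h => ⟨h.2.1, h.1, h.2.2.1.symm, h.2.2.2.symm⟩

private lemma uconnected_glue {A : V → V → Prop} {S T : Set V}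
    (hS : UConnected A S)
    (h : ∀ t ∈ T, ∃ s ∈ S, Relation.ReflTransGen (UStep A (S ∪ T)) t s) :
    UConnected A (S ∪ T) := by
  refine ⟨hS.1.mono Set.subset_union_left, ?_⟩
  have key : ∀ u ∈ S ∪ T, ∃ s ∈ S, Relation.ReflTransGen (UStep A (S ∪ T)) u s := by
    intro u hu
    rcases hu with hu | hu
    · exact ⟨u, hu, Relation.ReflTransGen.refl⟩
    · exact h u hu
  intro u hu v hv
  obtain ⟨s₁, hs₁, h1⟩ := key u hu
  obtain ⟨s₂, hs₂, h2⟩ := key v hv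
  have hmid : Relation.ReflTransGen (UStep A (S ∪ T)) s₁ s₂ :=
    Relation.ReflTransGen.mono (fun a b hab => ⟨Or.inl hab.1, Or.inl hab.2.1, hab.2.2⟩) _ _ (hS.2 s₁ hs₁ s₂ hs₂)
  exact h1.trans (hmid.trans (haveI : Std.Symm (UStep A (S ∪ T)) := ⟨fun a b h => ustep_symm h⟩; Std.Symm.symm _ _ h2))

private lemma reach_along_chain {A : V → V → Prop} {S Y : Set V} (l : List V)
    (hch : l.Chain' (StepIn A S)) (hsub : ∀ x ∈ l, x ∈ Y) {e : V} (he : e ∈ l) {b : V}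
    (hb : l.getLast? = some b) :
    Relation.ReflTransGen (StepIn A Y) e b := by
  obtain ⟨P, M, rfl⟩ := List.append_of_mem he
  have hch' : (e :: M).Chain' (StepIn A S) := hch.suffix ⟨P, rfl⟩
  have hb' : (e :: M).getLast? = some b := by
    rw [getLast?_append_cons] at hb; exact hb
  have := chain'_rtg (e :: M) hch' e rfl b hb'
  exact Relation.ReflTransGen.mono (fun x y hxy =>
    ⟨hsub x (by simp only [List.mem_append]; exact Or.inr hxy.1),
     hsub y (by simp only [List.mem_append]; exact Or.inr hxy.2.1), hxy.2.2.2.2⟩) _ _ this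

end Helpers

section Ear

variable {V : Type*}

private def USym (A : V → V → Prop) (a b : V) : Prop := a ≠ b ∧ (A a b ∨ A b a)

private lemma usym_flip {A : V → V → Prop} : ∀ a b : V, USym A a b → flip (USym A) a b :=
  fun _ _ h => ⟨h.1.symm, h.2.symm⟩

private lemma ear_walk {A : V → V → Prop} {X : Set V} (L : List V) (hnd : L.Nodup)
    (hch : L.Chain' (USym A))
    {x₁ x₂ : V} (hh : L.head? = some x₁) (hl : L.getLast? = some x₂)
    (hx₁ : x₁ ∈ X) (hx₂ : x₂ ∈ X) (v : V) {e : V} (he : e ∈ L) (heX : e ∉ X)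
    (hev : e ≠ v) :
    ∃ x ∈ X, x ≠ v ∧
      Relation.ReflTransGen (UStep A ((X ∪ ({w | w ∈ L} \ X)) \ {v})) e x := by
  set Y : Set V := X ∪ ({w | w ∈ L} \ X) with hY
  have hLY : ∀ x ∈ L, x ∈ Y := by
    intro x hx
    by_cases hxX : x ∈ X
    · exact Or.inl hxX
    · exact Or.inr ⟨hx, hxX⟩
  obtain ⟨P, M, hPM⟩ := List.append_of_mem he
  by_cases hvM : v ∈ e :: M
  · -- backward walk, to x₁
    have hvP : v ∉ P := by
      intro hvPmem
      have h' : (P ++ e :: M).Nodup := hPM ▸ hnd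
      rw [List.nodup_append] at h'
      exact h'.2.2 v hvPmem v hvM rfl
    have hPne : P ≠ [] := by
      intro hPnil
      subst hPnil
      simp only [List.nil_append] at hPM
      rw [hPM] at hh
      simp only [List.head?, Option.some_inj] at hh
      exact heX (hh ▸ hx₁)
    have hchrev : L.reverse.Chain' (USym A) :=
      List.isChain_reverse.mpr (hch.imp usym_flip)
    have hrevEq : L.reverse = M.reverse ++ e :: P.reverse := by
      rw [hPM]; simp
    have hch2 : (e :: P.reverse).Chain' (USym A) := by
      rw [hrevEq] at hchrev
      exact hchrev.suffix ⟨M.reverse, rfl⟩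
    have hlast2 : (e :: P.reverse).getLast? = some x₁ := by
      have h1 : P.head? = some x₁ := by
        rw [hPM, List.head?_append] at hh
        have : P.head?.isSome := by
          cases hp : P.head? with
          | none => exact absurd (List.head?_eq_none_iff.mp hp) hPne
          | some _ => simp
        obtain ⟨c, hc⟩ := Option.isSome_iff_exists.mp this
        rw [hc] at hh ⊢
        simpa using hh
      have : (e :: P.reverse) = [e] ++ P.reverse := rfl
      rw [this, List.getLast?_append, List.getLast?_reverse, h1]
      rfl
    have hx₁P : x₁ ∈ P := List.mem_reverse.mp (by
      have := List.mem_of_getLast? hlast2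
      rcases List.mem_cons.mp this with rfl | hmem
      · exact absurd hx₁ heX
      · exact hmem)
    have hwalk := chain'_rtg (e :: P.reverse) hch2 e rfl x₁ hlast2
    refine ⟨x₁, hx₁, ?_, ?_⟩
    · intro hveq; subst hveq; exact hvP hx₁P
    · refine Relation.ReflTransGen.mono (fun a b hab => ?_) _ _ hwalk
      have hmemY : ∀ z ∈ e :: P.reverse, z ∈ Y \ {v} := by
        intro z hz
        rcases List.mem_cons.mp hz with rfl | hz'
        · exact ⟨hLY z he, hev⟩
        · have hzP : z ∈ P := List.mem_reverse.mp hz'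
          refine ⟨hLY z (by rw [hPM]; exact List.mem_append_left _ hzP), ?_⟩
          intro hzv; subst hzv; exact hvP hzP
      exact ⟨hmemY a hab.1, hmemY b hab.2.1, hab.2.2.1, hab.2.2.2⟩
  · -- forward walk, to x₂
    have hch2 : (e :: M).Chain' (USym A) := by
      rw [hPM] at hch
      exact hch.suffix ⟨P, rfl⟩
    have hlast2 : (e :: M).getLast? = some x₂ := by
      rw [hPM, getLast?_append_cons] at hl; exact hl
    have hwalk := chain'_rtg (e :: M) hch2 e rfl x₂ hlast2
    have hx₂mem : x₂ ∈ e :: M := List.mem_of_getLast? hlast2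
    refine ⟨x₂, hx₂, fun hveq => hvM (hveq ▸ hx₂mem), ?_⟩
    refine Relation.ReflTransGen.mono (fun a b hab => ?_) _ _ hwalk
    have hmemY : ∀ z ∈ e :: M, z ∈ Y \ {v} := by
      intro z hz
      refine ⟨hLY z (by rw [hPM]; exact List.mem_append_right _ hz), ?_⟩
      intro hzv; subst hzv; exact hvM hz
    exact ⟨hmemY a hab.1, hmemY b hab.2.1, hab.2.2.1, hab.2.2.2⟩

private lemma ear_biconnected [Fintype V] {A : V → V → Prop} {X : Set V}
    (hX : Biconnected A X) (L : List V) (hnd : L.Nodup)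
    (hch : L.Chain' (USym A))
    {x₁ x₂ : V} (hh : L.head? = some x₁) (hl : L.getLast? = some x₂)
    (hx₁ : x₁ ∈ X) (hx₂ : x₂ ∈ X) :
    Biconnected A (X ∪ ({w | w ∈ L} \ X)) := by
  set E : Set V := {w | w ∈ L} \ X with hE
  set Y : Set V := X ∪ E with hYdef
  have hLY : ∀ x ∈ L, x ∈ Y := by
    intro x hx
    by_cases hxX : x ∈ X
    · exact Or.inl hxX
    · exact Or.inr ⟨hx, hxX⟩
  refine ⟨?_, ?_, ?_⟩
  · exact le_trans hX.1 (Set.ncard_le_ncard Set.subset_union_left (Set.toFinite Y))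
  · -- UConnected Y
    refine uconnected_glue hX.2.1 ?_
    intro t ht
    obtain ⟨htL, htX⟩ := ht
    obtain ⟨P, M, hPM⟩ := List.append_of_mem htL
    have hch2 : (t :: M).Chain' (USym A) := by
      rw [hPM] at hch; exact hch.suffix ⟨P, rfl⟩
    have hlast2 : (t :: M).getLast? = some x₂ := by
      rw [hPM, getLast?_append_cons] at hl; exact hl
    refine ⟨x₂, hx₂, Relation.ReflTransGen.mono (fun a b hab => ?_) _ _ (chain'_rtg (t :: M) hch2 t rfl x₂ hlast2)⟩
    have hmem : ∀ z ∈ t :: M, z ∈ Y :=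
      fun z hz => hLY z (by rw [hPM]; exact List.mem_append_right _ hz)
    exact ⟨hmem a hab.1, hmem b hab.2.1, hab.2.2.1, hab.2.2.2⟩
  · -- deletions
    intro v hv
    have hXv : UConnected A (X \ {v}) := by
      by_cases hvX : v ∈ X
      · exact hX.2.2 v hvX
      · rw [Set.diff_singleton_eq_self hvX]; exact hX.2.1
    have hset : (X \ {v}) ∪ (E \ {v}) = Y \ {v} := by
      rw [hYdef, Set.union_diff_distrib]
    have := uconnected_glue (T := E \ {v}) hXv ?_
    · rwa [hset] at this
    · intro t ht
      obtain ⟨⟨htL, htX⟩, htv⟩ := ht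
      obtain ⟨x, hxX, hxv, hwalk⟩ :=
        ear_walk L hnd hch hh hl hx₁ hx₂ v htL htX htv
      exact ⟨x, ⟨hxX, hxv⟩, hset ▸ hwalk⟩

end Ear

private lemma assemble [Fintype V] {A : V → V → Prop} {W X : Set V} {i k : V}
    (hWX : W ⊆ X) (hiX : i ∈ X) (hXb : Biconnected A X)
    (hreachX : ∀ v ∈ X, ReachIn A X v i)
    (L : List V) (hnd : L.Nodup) (hch : L.Chain' (USym A))
    {x₁ x₂ : V} (hh : L.head? = some x₁) (hl : L.getLast? = some x₂)
    (hx₁ : x₁ ∈ X) (hx₂ : x₂ ∈ X) (hkL : k ∈ L)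
    (hreachE : ∀ e ∈ L, e ∉ X → ReachIn A (X ∪ ({w | w ∈ L} \ X)) e i) :
    ∃ Y : Set V, W ∪ {k} ⊆ Y ∧ DirectedSubBlock A Y ∧ (∀ v ∈ Y, ReachIn A Y v i) := by
  have hre : ∀ v ∈ X ∪ ({w | w ∈ L} \ X), ReachIn A (X ∪ ({w | w ∈ L} \ X)) v i := by
    intro v hv
    rcases hv with hvX | ⟨hvL, hvX⟩
    · exact reachIn_mono Set.subset_union_left (hreachX v hvX)
    · exact hreachE v hvL hvX
  refine ⟨X ∪ ({w | w ∈ L} \ X), ?_,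
    ⟨⟨i, Or.inl hiX, hre⟩, ear_biconnected hXb L hnd hch hh hl hx₁ hx₂⟩, hre⟩
  refine Set.union_subset (hWX.trans Set.subset_union_left) ?_
  intro z hz
  obtain rfl : k = z := (show z = k from hz).symm
  by_cases hkX : k ∈ X
  · exact Or.inl hkX
  · exact Or.inr ⟨hkL, hkX⟩

/-- Lemma A.4, inductive step. -/
theorem stmt6 [Fintype V] (A : V → V → Prop) (hirr : ∀ v : V, ¬ A v v)
    (W X : Set V) (i k : V)
    (hWcard : 3 ≤ W.ncard) (hWX : W ⊆ X) (hiW : i ∈ W)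
    (hX : DirectedSubBlock A X)
    (hreachW : ∀ v ∈ W, ReachIn A W v i)
    (hreachX : ∀ v ∈ X, ReachIn A X v i)
    (hk : k ∉ W) (hstep : ExactStep A W (W ∪ {k})) :
    ∃ Y : Set V, W ∪ {k} ⊆ Y ∧ DirectedSubBlock A Y ∧
      (∀ v ∈ W ∪ {k}, ReachIn A (W ∪ {k}) v i) ∧
      (∀ v ∈ Y, ReachIn A Y v i) := by
  -- extract j and fix k
  obtain ⟨k', hk', hWk', j, hjW, hAkj, hndp⟩ := hstep
  have hkk' : k = k' := by
    have hkmem : k ∈ W ∪ {k'} := by rw [← hWk']; exact Or.inr rfl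
    rcases hkmem with h | h
    · exact absurd h hk
    · exact h
  subst hkk'
  have hkj : k ≠ j := fun h => hk (h ▸ hjW)
  have hjX : j ∈ X := hWX hjW
  have hiX : i ∈ X := hWX hiW
  have hreachW' : ∀ v ∈ W ∪ {k}, ReachIn A (W ∪ {k}) v i := by
    intro v hv
    rcases hv with hvW | hvk
    · exact reachIn_mono Set.subset_union_left (hreachW v hvW)
    · obtain rfl : k = v := (show v = k from hvk).symm
      have h2 := reachIn_mono (Set.subset_union_left : W ⊆ W ∪ {k}) (hreachW j hjW)
      exact ⟨Or.inr rfl, Relation.ReflTransGen.head ⟨Or.inr rfl, Or.inl hjW, hAkj⟩ h2.2⟩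
  by_cases hkX : k ∈ X
  · exact ⟨X, Set.union_subset hWX (by intro z hz; obtain rfl : z = k := hz; exact hkX),
      hX, hreachW', hreachX⟩
  -- k ∉ X : extract u with j-avoiding paths to k and to some w ∈ W \ {j}
  have hXb : Biconnected A X := hX.2
  have hne : (InSet A {j}ᶜ {k} ∩ InSet A {j}ᶜ (W \ {j})).Nonempty := by
    rw [Set.nonempty_iff_ne_empty]; exact hndp
  obtain ⟨u, hu1, hu2⟩ := hne
  obtain ⟨k'', hk''eq, huk⟩ := hu1
  obtain rfl : k = k'' := (show k'' = k from hk''eq).symm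
  obtain ⟨w, hwW, huw⟩ := hu2
  have hwX : w ∈ X := hWX hwW.1
  have huj : u ∈ ({j}ᶜ : Set V) := huk.1
  obtain ⟨L1, hch1, hnd1, hh1, hl1⟩ := rtg_toNodupList huk.2
  obtain ⟨L2, hch2, hnd2, hh2, hl2⟩ := rtg_toNodupList huw.2
  have hmem1 : ∀ x ∈ L1, x ∈ ({j}ᶜ : Set V) := chain'_mem_S L1 hch1 u hh1 huj
  have hmem2 : ∀ x ∈ L2, x ∈ ({j}ᶜ : Set V) := chain'_mem_S L2 hch2 u hh2 huj
  have husym : ∀ (l : List V), l.Chain' (StepIn A {j}ᶜ) → l.Chain' (USym A) := by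
    intro l hl'
    refine hl'.imp fun a b hab => ⟨?_, Or.inl hab.2.2⟩
    rintro rfl
    exact hirr a hab.2.2
  by_cases hL1X : ∃ x ∈ L1, x ∈ X
  · -- CASE A : the path u → k meets X ; take the suffix after the last X-vertex
    obtain ⟨P, x₀, Q, hsplit, hx₀X, hQ⟩ := split_last L1 hL1X
    have hlQ : (x₀ :: Q).getLast? = some k := by
      rw [hsplit, getLast?_append_cons] at hl1; exact hl1
    have hkQ : k ∈ x₀ :: Q := List.mem_of_getLast? hlQ
    have hchQ : (x₀ :: Q).Chain' (StepIn A {j}ᶜ) := by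
      rw [hsplit] at hch1; exact hch1.suffix ⟨P, rfl⟩
    have hsubQL1 : ∀ z ∈ x₀ :: Q, z ∈ L1 := by
      intro z hz; rw [hsplit]; exact List.mem_append_right _ hz
    set L : List V := (x₀ :: Q) ++ [j] with hLdef
    have hchL : L.Chain' (USym A) := by
      refine (husym _ hchQ).append (List.isChain_singleton j) ?_
      intro x hx y hy
      rw [hlQ] at hx
      obtain rfl : k = x := by simpa using hx
      obtain rfl : j = y := by simpa using hy
      exact ⟨hkj, Or.inl hAkj⟩
    have hndL : L.Nodup := by
      rw [List.nodup_append]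
      refine ⟨List.Nodup.sublist (List.IsSuffix.sublist ⟨P, hsplit.symm⟩) hnd1, by simp, ?_⟩
      intro a ha b hb hab
      subst hab
      obtain rfl : j = a := (by simpa using hb : a = j).symm
      exact (hmem1 j (hsubQL1 j ha)) rfl
    have hhL : L.head? = some x₀ := by rw [hLdef, List.head?_append]; rfl
    have hlL : L.getLast? = some j := by rw [hLdef, List.getLast?_append]; rfl
    have hkL : k ∈ L := List.mem_append_left _ hkQ
    have hE : ∀ e ∈ L, e ∉ X → ReachIn A (X ∪ ({z | z ∈ L} \ X)) e i := by
      intro e heL heX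
      have heQ : e ∈ x₀ :: Q := by
        rcases List.mem_append.mp heL with h | h
        · exact h
        · obtain rfl : e = j := by simpa using h
          exact absurd hjX heX
      have hsubY : ∀ x ∈ x₀ :: Q, x ∈ X ∪ ({z | z ∈ L} \ X) := by
        intro x hx
        by_cases hxX : x ∈ X
        · exact Or.inl hxX
        · exact Or.inr ⟨List.mem_append_left _ hx, hxX⟩
      have hek := reach_along_chain (Y := X ∪ ({z | z ∈ L} \ X)) _ hchQ hsubY heQ hlQ
      have hji := reachIn_mono (Set.subset_union_left : X ⊆ X ∪ ({z | z ∈ L} \ X)) (hreachX j hjX)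
      exact ⟨hsubY e heQ,
        hek.trans (Relation.ReflTransGen.head ⟨hsubY k hkQ, Or.inl hjX, hAkj⟩ hji.2)⟩
    obtain ⟨Y, hY1, hY2, hY3⟩ := assemble hWX hiX hXb hreachX L hndL hchL hhL hlL hx₀X hjX hkL hE
    exact ⟨Y, hY1, hY2, hreachW', hY3⟩
  · -- CASE B : the path u → k avoids X
    push_neg at hL1X
    have huL2 : u ∈ L2 := List.mem_of_mem_head? (by rw [hh2]; rfl)
    have huL1 : u ∈ L1 := List.mem_of_mem_head? (by rw [hh1]; rfl)
    obtain ⟨P₂, c, Q₂, hsplit2, hcL1, hQ₂⟩ := split_last L2 ⟨u, huL2, huL1⟩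
    have hlQ₂ : (c :: Q₂).getLast? = some w := by
      rw [hsplit2, getLast?_append_cons] at hl2; exact hl2
    have hcX : c ∉ X := hL1X c hcL1
    have hQ₂ne : Q₂ ≠ [] := by
      rintro rfl
      simp only [List.getLast?_singleton, Option.some_inj] at hlQ₂
      exact hcX (hlQ₂ ▸ hwX)
    have hwQ₂ : w ∈ Q₂ := by
      have hq : Q₂.getLast? = some w := by
        have h' := hlQ₂
        rw [show (c :: Q₂) = [c] ++ Q₂ from rfl, List.getLast?_append] at h'
        obtain ⟨b, hb⟩ := Option.isSome_iff_exists.mp (List.getLast?_isSome.mpr hQ₂ne)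
        rw [hb] at h' ⊢
        simpa using h'
      exact List.mem_of_getLast? hq
    obtain ⟨P₃, x₀, R₃, hsplit3, hx₀X, hP₃⟩ := split_first Q₂ ⟨w, hwQ₂, hwX⟩
    obtain ⟨P₁, M₁, hsplit1⟩ := List.append_of_mem hcL1
    have hlM₁ : (c :: M₁).getLast? = some k := by
      rw [hsplit1, getLast?_append_cons] at hl1; exact hl1
    have hkM₁ : k ∈ c :: M₁ := List.mem_of_getLast? hlM₁
    have hsubML1 : ∀ z ∈ c :: M₁, z ∈ L1 := by
      intro z hz; rw [hsplit1]; exact List.mem_append_right _ hz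
    have hsubPQ₂ : ∀ z ∈ P₃ ++ [x₀], z ∈ Q₂ := by
      intro z hz
      rw [hsplit3]
      rcases List.mem_append.mp hz with h | h
      · exact List.mem_append_left _ h
      · obtain rfl : z = x₀ := by simpa using h
        exact List.mem_append_right _ (List.mem_cons_self)
    have hchM : (c :: M₁).Chain' (StepIn A {j}ᶜ) := by
      rw [hsplit1] at hch1; exact hch1.suffix ⟨P₁, rfl⟩
    have hch3 : (c :: (P₃ ++ [x₀])).Chain' (StepIn A {j}ᶜ) := by
      rw [hsplit2, hsplit3] at hch2
      exact hch2.infix ⟨P₂, R₃, by simp⟩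
    set L : List V := ([j] ++ (c :: M₁).reverse) ++ (P₃ ++ [x₀]) with hLdef
    have hheadrev : (c :: M₁).reverse.head? = some k := by
      rw [List.head?_reverse, hlM₁]
    have hlastrev : (c :: M₁).reverse.getLast? = some c := by
      rw [List.getLast?_reverse]; rfl
    have hglfirst : ([j] ++ (c :: M₁).reverse).getLast? = some c := by
      rw [List.getLast?_append, hlastrev]; rfl
    have hchL : L.Chain' (USym A) := by
      refine List.IsChain.append ?_ ?_ ?_
      · refine List.IsChain.append (List.isChain_singleton j) ?_ ?_
        · exact List.isChain_reverse.mpr ((husym _ hchM).imp fun a b h => ⟨h.1.symm, h.2.symm⟩)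
        · intro x hx y hy
          obtain rfl : j = x := by simpa using hx
          rw [hheadrev] at hy
          obtain rfl : k = y := by simpa using hy
          exact ⟨fun h => hkj h.symm, Or.inr hAkj⟩
      · exact (List.isChain_cons.mp (husym _ hch3)).2
      · intro x hx y hy
        rw [hglfirst] at hx
        obtain rfl : c = x := by simpa using hx
        exact (List.isChain_cons.mp (husym _ hch3)).1 y hy
    have hQ₂nodup : Q₂.Nodup :=
      List.Nodup.sublist (List.IsSuffix.sublist ⟨P₂ ++ [c], by rw [hsplit2]; simp⟩) hnd2
    have hndL : L.Nodup := by
      rw [List.nodup_append, List.nodup_append]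
      refine ⟨⟨by simp, List.nodup_reverse.mpr
        (List.Nodup.sublist (List.IsSuffix.sublist ⟨P₁, hsplit1.symm⟩) hnd1), ?_⟩, ?_, ?_⟩
      · intro a ha b hb hab
        subst hab
        obtain rfl : j = a := (by simpa using ha : a = j).symm
        exact (hmem1 j (hsubML1 j (List.mem_reverse.mp hb))) rfl
      · exact List.Nodup.sublist (List.IsPrefix.sublist ⟨R₃, by rw [hsplit3]; simp⟩) hQ₂nodup
      · intro a ha b hb hab
        subst hab
        have haQ₂ : a ∈ Q₂ := hsubPQ₂ a hb
        rcases List.mem_append.mp ha with h | h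
        · obtain rfl : j = a := (by simpa using h : a = j).symm
          refine (hmem2 j ?_) rfl
          rw [hsplit2]
          exact List.mem_append_right _ (List.mem_cons_of_mem _ haQ₂)
        · exact hQ₂ a haQ₂ (hsubML1 a (List.mem_reverse.mp h))
    have hhL : L.head? = some j := by
      rw [hLdef, List.head?_append, List.head?_append]; rfl
    have hlL : L.getLast? = some x₀ := by
      rw [hLdef, List.getLast?_append, List.getLast?_append]; rfl
    have hkL : k ∈ L :=
      List.mem_append_left _ (List.mem_append_right _ (List.mem_reverse.mpr hkM₁))
    have hsubL : ∀ z ∈ c :: M₁, z ∈ L := by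
      intro z hz
      exact List.mem_append_left _ (List.mem_append_right _ (List.mem_reverse.mpr hz))
    have hsubL3 : ∀ z ∈ c :: (P₃ ++ [x₀]), z ∈ L := by
      intro z hz
      rcases List.mem_cons.mp hz with rfl | hz'
      · exact hsubL z (List.mem_cons_self)
      · exact List.mem_append_right _ hz'
    have hE : ∀ e ∈ L, e ∉ X → ReachIn A (X ∪ ({z | z ∈ L} \ X)) e i := by
      intro e heL heX
      have hsubY : ∀ x ∈ L, x ∈ X ∪ ({z | z ∈ L} \ X) := by
        intro x hx
        by_cases hxX : x ∈ X
        · exact Or.inl hxX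
        · exact Or.inr ⟨hx, hxX⟩
      have heY : e ∈ X ∪ ({z | z ∈ L} \ X) := hsubY e heL
      have hkstep : Relation.ReflTransGen (StepIn A (X ∪ ({z | z ∈ L} \ X))) k i := by
        have hji := reachIn_mono (Set.subset_union_left : X ⊆ X ∪ ({z | z ∈ L} \ X))
          (hreachX j hjX)
        exact Relation.ReflTransGen.head ⟨hsubY k hkL, Or.inl hjX, hAkj⟩ hji.2
      rcases List.mem_append.mp heL with h | h
      · rcases List.mem_append.mp h with h' | h'
        · obtain rfl : e = j := by simpa using h'
          exact absurd hjX heX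
        · have heM : e ∈ c :: M₁ := List.mem_reverse.mp h'
          have hek := reach_along_chain (Y := X ∪ ({z | z ∈ L} \ X)) _ hchM
            (fun z hz => hsubY z (hsubL z hz)) heM hlM₁
          exact ⟨heY, hek.trans hkstep⟩
      · have he3 : e ∈ c :: (P₃ ++ [x₀]) := List.mem_cons_of_mem _ h
        have hl3 : (c :: (P₃ ++ [x₀])).getLast? = some x₀ := by
          rw [show (c :: (P₃ ++ [x₀])) = [c] ++ (P₃ ++ [x₀]) from rfl,
            List.getLast?_append, List.getLast?_append]
          rfl
        have hex := reach_along_chain (Y := X ∪ ({z | z ∈ L} \ X)) _ hch3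
          (fun z hz => hsubY z (hsubL3 z hz)) he3 hl3
        have hx₀i := reachIn_mono (Set.subset_union_left : X ⊆ X ∪ ({z | z ∈ L} \ X))
          (hreachX x₀ hx₀X)
        exact ⟨heY, hex.trans hx₀i.2⟩
    obtain ⟨Y, hY1, hY2, hY3⟩ := assemble hWX hiX hXb hreachX L hndL hchL hhL hlL hjX hx₀X hkL hE
    exact ⟨Y, hY1, hY2, hreachW', hY3⟩
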